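/- Fix C₄ ≠ 0 and let η̃ be the constant symmetric matrix [[0,0,C₄],[0,C₄,0],[C₄,0,0]]. Then the function F(x¹,x²,x³) = (C₄/2)(x¹)²x³ + (C₄/2)x¹(x²)² + (C₄/8)(x²)⁴/x³ satisfies the WDVV associativity equations with respect to η̃ on the open set {x ∈ ℝ³ : x³ ≠ 0}. -/

import Mathlib

open Matrix

/-- Partial derivative of `g : (Fin n → ℝ) → ℝ` with respect to the `i`-th coordinate. -/
noncomputable def pd {n : ℕ} (g : (Fin n → ℝ) → ℝ) (i : Fin n) (u : Fin n → ℝ) : ℝ :=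
  deriv (fun t => g (Function.update u i t)) (u i)

/-- Third partial derivative `∂ᵢ∂ⱼ∂ₖ g`. -/
noncomputable def pd3rd {n : ℕ} (g : (Fin n → ℝ) → ℝ) (i j k : Fin n)
    (u : Fin n → ℝ) : ℝ :=
  pd (pd (pd g k) j) i u

/-- `F` satisfies the WDVV associativity equations with respect to the constant
symmetric matrix `η̃` on the set `U`:
`Σ_{a,b} (∂ᵢ∂ⱼ∂ₐF) η̃^{ab} (∂_b∂ₖ∂_lF) = Σ_{a,b} (∂ₖ∂ⱼ∂ₐF) η̃^{ab} (∂_b∂ᵢ∂_lF)`. -/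
def SatisfiesWDVV {n : ℕ} (η : Matrix (Fin n) (Fin n) ℝ) (F : (Fin n → ℝ) → ℝ)
    (U : Set (Fin n → ℝ)) : Prop :=
  ∀ x ∈ U, ∀ i j k l : Fin n,
    ∑ a : Fin n, ∑ b : Fin n, pd3rd F i j a x * η⁻¹ a b * pd3rd F b k l x
      = ∑ a : Fin n, ∑ b : Fin n, pd3rd F k j a x * η⁻¹ a b * pd3rd F b i l x

lemma dP (a b c d e p : ℝ) :
    deriv (fun t : ℝ => a*t^4 + b*t^3 + c*t^2 + d*t + e) p
      = 4*a*p^3 + 3*b*p^2 + 2*c*p + d := by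
  have h1 := (((((hasDerivAt_pow 4 p).const_mul a).add
      ((hasDerivAt_pow 3 p).const_mul b)).add
      ((hasDerivAt_pow 2 p).const_mul c)).add
      ((hasDerivAt_id p).const_mul d)).add_const e
  have h : HasDerivAt (fun t : ℝ => a*t^4 + b*t^3 + c*t^2 + d*t + e)
      (4*a*p^3 + 3*b*p^2 + 2*c*p + d) p := by
    refine h1.congr_deriv ?_
    norm_num; ring
  exact h.deriv

lemma dL (a b c d e p : ℝ) (hp : p ≠ 0) :
    deriv (fun t : ℝ => a*t + b + c*t⁻¹ + d*(t^2)⁻¹ + e*(t^3)⁻¹) p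
      = a - c*(p^2)⁻¹ - 2*d*(p^3)⁻¹ - 3*e*(p^4)⁻¹ := by
  have h1 := (((((hasDerivAt_id p).const_mul a).add_const b).add
      ((hasDerivAt_inv hp).const_mul c)).add
      (((hasDerivAt_pow 2 p).inv (pow_ne_zero 2 hp)).const_mul d)).add
      (((hasDerivAt_pow 3 p).inv (pow_ne_zero 3 hp)).const_mul e)
  have h : HasDerivAt (fun t : ℝ => a*t + b + c*t⁻¹ + d*(t^2)⁻¹ + e*(t^3)⁻¹)
      (a - c*(p^2)⁻¹ - 2*d*(p^3)⁻¹ - 3*e*(p^4)⁻¹) p := by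
    refine h1.congr_deriv ?_
    field_simp
    ring
  exact h.deriv

lemma pdP (g : (Fin 3 → ℝ) → ℝ) (j : Fin 3) (u : Fin 3 → ℝ) (a b c d e : ℝ)
    (h : ∀ t, g (Function.update u j t) = a*t^4 + b*t^3 + c*t^2 + d*t + e) :
    pd g j u = 4*a*(u j)^3 + 3*b*(u j)^2 + 2*c*(u j) + d := by
  unfold pd
  rw [show (fun t => g (Function.update u j t))
      = (fun t : ℝ => a*t^4 + b*t^3 + c*t^2 + d*t + e) from funext h, dP]

lemma pdL (g : (Fin 3 → ℝ) → ℝ) (j : Fin 3) (u : Fin 3 → ℝ) (hu : u j ≠ 0) (a b c d e : ℝ)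
    (h : ∀ t, g (Function.update u j t) = a*t + b + c*t⁻¹ + d*(t^2)⁻¹ + e*(t^3)⁻¹) :
    pd g j u = a - c*((u j)^2)⁻¹ - 2*d*((u j)^3)⁻¹ - 3*e*((u j)^4)⁻¹ := by
  unfold pd
  rw [show (fun t => g (Function.update u j t))
      = (fun t : ℝ => a*t + b + c*t⁻¹ + d*(t^2)⁻¹ + e*(t^3)⁻¹) from funext h, dL _ _ _ _ _ _ hu]

lemma pd_congr {g h : (Fin 3 → ℝ) → ℝ} (H : ∀ x, x 2 ≠ 0 → g x = h x)
    (j : Fin 3) (u : Fin 3 → ℝ) (hu : u 2 ≠ 0) : pd g j u = pd h j u := by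
  unfold pd
  apply Filter.EventuallyEq.deriv_eq
  have hc : ContinuousAt (fun t : ℝ => Function.update u j t 2) (u j) := by
    by_cases hj : (2 : Fin 3) = j
    · subst hj
      simp only [Function.update_self]
      exact (continuousAt_id : ContinuousAt (fun t : ℝ => t) (u 2))
    · simp only [Function.update_of_ne hj]
      exact continuousAt_const
  have h0 : (fun t : ℝ => Function.update u j t 2) (u j) ≠ 0 := by
    simp only [Function.update_eq_self]; exact hu
  exact (hc.eventually_ne h0).mono fun t ht => H _ ht

noncomputable def FF (C : ℝ) : (Fin 3 → ℝ) → ℝ := fun x =>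
  C / 2 * (x 0) ^ 2 * x 2 + C / 2 * x 0 * (x 1) ^ 2 + C / 8 * (x 1) ^ 4 / x 2

noncomputable def f1 (C : ℝ) : Fin 3 → (Fin 3 → ℝ) → ℝ :=
  ![fun x => C * x 0 * x 2 + C/2 * (x 1)^2,
    fun x => C * x 0 * x 1 + C/2 * (x 1)^3 * (x 2)⁻¹,
    fun x => C/2 * (x 0)^2 - C/8 * (x 1)^4 * ((x 2)^2)⁻¹]

noncomputable def f2 (C : ℝ) : Fin 3 → Fin 3 → (Fin 3 → ℝ) → ℝ :=
  ![![fun x => C * x 2, fun x => C * x 1, fun x => C * x 0],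
    ![fun x => C * x 1, fun x => C * x 0 + 3*C/2 * (x 1)^2 * (x 2)⁻¹,
      fun x => -(C/2) * (x 1)^3 * ((x 2)^2)⁻¹],
    ![fun x => C * x 0, fun x => -(C/2) * (x 1)^3 * ((x 2)^2)⁻¹,
      fun x => C/4 * (x 1)^4 * ((x 2)^3)⁻¹]]

noncomputable def f3 (C : ℝ) : Fin 3 → Fin 3 → Fin 3 → (Fin 3 → ℝ) → ℝ :=
  ![![![fun _ => 0, fun _ => 0, fun _ => C],
     ![fun _ => 0, fun _ => C, fun _ => 0],
     ![fun _ => C, fun _ => 0, fun _ => 0]],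
    ![![fun _ => 0, fun _ => C, fun _ => 0],
     ![fun _ => C, fun x => 3*C*x 1*(x 2)⁻¹, fun x => -(3*C/2)*(x 1)^2*((x 2)^2)⁻¹],
     ![fun _ => 0, fun x => -(3*C/2)*(x 1)^2*((x 2)^2)⁻¹, fun x => C*(x 1)^3*((x 2)^3)⁻¹]],
    ![![fun _ => C, fun _ => 0, fun _ => 0],
     ![fun _ => 0, fun x => -(3*C/2)*(x 1)^2*((x 2)^2)⁻¹, fun x => C*(x 1)^3*((x 2)^3)⁻¹],
     ![fun _ => 0, fun x => C*(x 1)^3*((x 2)^3)⁻¹, fun x => -(3*C/4)*(x 1)^4*((x 2)^4)⁻¹]]]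

lemma L2 (C : ℝ) (u : Fin 3 → ℝ) (hu : u 2 ≠ 0) (a j : Fin 3) :
    pd (f1 C a) j u = f2 C a j u := by
  fin_cases a <;> fin_cases j
  · refine (pdP _ _ _ 0 0 0 (C*u 2) (C/2*(u 1)^2)
      (fun t => by simp [f1, Function.update_apply]; try ring)).trans ?_
    simp [f2, -mul_eq_mul_right_iff, -mul_eq_mul_left_iff]; try ring
  · refine (pdP _ _ _ 0 0 (C/2) 0 (C*u 0*u 2)
      (fun t => by simp [f1, Function.update_apply]; try ring)).trans ?_
    simp [f2, -mul_eq_mul_right_iff, -mul_eq_mul_left_iff]; try ring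
  · refine (pdP _ _ _ 0 0 0 (C*u 0) (C/2*(u 1)^2)
      (fun t => by simp [f1, Function.update_apply]; try ring)).trans ?_
    simp [f2, -mul_eq_mul_right_iff, -mul_eq_mul_left_iff]; try ring
  · refine (pdP _ _ _ 0 0 0 (C*u 1) (C/2*(u 1)^3*(u 2)⁻¹)
      (fun t => by simp [f1, Function.update_apply]; try ring)).trans ?_
    simp [f2, -mul_eq_mul_right_iff, -mul_eq_mul_left_iff]; try ring
  · refine (pdP _ _ _ 0 (C/2*(u 2)⁻¹) 0 (C*u 0) 0
      (fun t => by simp [f1, Function.update_apply]; try ring)).trans ?_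
    simp [f2, -mul_eq_mul_right_iff, -mul_eq_mul_left_iff]; try ring
  · refine (pdL _ _ _ hu 0 (C*u 0*u 1) (C/2*(u 1)^3) 0 0
      (fun t => by simp [f1, Function.update_apply]; try ring)).trans ?_
    simp [f2, -mul_eq_mul_right_iff, -mul_eq_mul_left_iff]; try ring
  · refine (pdP _ _ _ 0 0 (C/2) 0 (-(C/8)*(u 1)^4*((u 2)^2)⁻¹)
      (fun t => by simp [f1, Function.update_apply]; try ring)).trans ?_
    simp [f2, -mul_eq_mul_right_iff, -mul_eq_mul_left_iff]; try ring
  · refine (pdP _ _ _ (-(C/8)*((u 2)^2)⁻¹) 0 0 0 (C/2*(u 0)^2)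
      (fun t => by simp [f1, Function.update_apply]; try ring)).trans ?_
    simp [f2, -mul_eq_mul_right_iff, -mul_eq_mul_left_iff]; try ring
  · refine (pdL _ _ _ hu 0 (C/2*(u 0)^2) 0 (-(C/8)*(u 1)^4) 0
      (fun t => by simp [f1, Function.update_apply]; try ring)).trans ?_
    simp [f2, -mul_eq_mul_right_iff, -mul_eq_mul_left_iff]; try ring

set_option maxHeartbeats 1000000 in
lemma L3 (C : ℝ) (u : Fin 3 → ℝ) (hu : u 2 ≠ 0) (a j i : Fin 3) :
    pd (f2 C a j) i u = f3 C a j i u := by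
  fin_cases a <;> fin_cases j <;> fin_cases i
  · refine (pdP _ _ _ 0 0 0 0 (C*u 2)
      (fun t => by simp [f2, Function.update_apply]; try ring)).trans ?_
    simp [f3, Matrix.vecHead, Matrix.vecTail, -mul_eq_mul_right_iff, -mul_eq_mul_left_iff]; try ring
  · refine (pdP _ _ _ 0 0 0 0 (C*u 2)
      (fun t => by simp [f2, Function.update_apply]; try ring)).trans ?_
    simp [f3, Matrix.vecHead, Matrix.vecTail, -mul_eq_mul_right_iff, -mul_eq_mul_left_iff]; try ring
  · refine (pdP _ _ _ 0 0 0 C 0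
      (fun t => by simp [f2, Function.update_apply]; try ring)).trans ?_
    simp [f3, Matrix.vecHead, Matrix.vecTail, -mul_eq_mul_right_iff, -mul_eq_mul_left_iff]; try ring
  · refine (pdP _ _ _ 0 0 0 0 (C*u 1)
      (fun t => by simp [f2, Function.update_apply]; try ring)).trans ?_
    simp [f3, Matrix.vecHead, Matrix.vecTail, -mul_eq_mul_right_iff, -mul_eq_mul_left_iff]; try ring
  · refine (pdP _ _ _ 0 0 0 C 0
      (fun t => by simp [f2, Function.update_apply]; try ring)).trans ?_
    simp [f3, Matrix.vecHead, Matrix.vecTail, -mul_eq_mul_right_iff, -mul_eq_mul_left_iff]; try ring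
  · refine (pdP _ _ _ 0 0 0 0 (C*u 1)
      (fun t => by simp [f2, Function.update_apply]; try ring)).trans ?_
    simp [f3, Matrix.vecHead, Matrix.vecTail, -mul_eq_mul_right_iff, -mul_eq_mul_left_iff]; try ring
  · refine (pdP _ _ _ 0 0 0 C 0
      (fun t => by simp [f2, Function.update_apply]; try ring)).trans ?_
    simp [f3, Matrix.vecHead, Matrix.vecTail, -mul_eq_mul_right_iff, -mul_eq_mul_left_iff]; try ring
  · refine (pdP _ _ _ 0 0 0 0 (C*u 0)
      (fun t => by simp [f2, Function.update_apply]; try ring)).trans ?_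
    simp [f3, Matrix.vecHead, Matrix.vecTail, -mul_eq_mul_right_iff, -mul_eq_mul_left_iff]; try ring
  · refine (pdP _ _ _ 0 0 0 0 (C*u 0)
      (fun t => by simp [f2, Function.update_apply]; try ring)).trans ?_
    simp [f3, Matrix.vecHead, Matrix.vecTail, -mul_eq_mul_right_iff, -mul_eq_mul_left_iff]; try ring
  · refine (pdP _ _ _ 0 0 0 0 (C*u 1)
      (fun t => by simp [f2, Function.update_apply]; try ring)).trans ?_
    simp [f3, Matrix.vecHead, Matrix.vecTail, -mul_eq_mul_right_iff, -mul_eq_mul_left_iff]; try ring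
  · refine (pdP _ _ _ 0 0 0 C 0
      (fun t => by simp [f2, Function.update_apply]; try ring)).trans ?_
    simp [f3, Matrix.vecHead, Matrix.vecTail, -mul_eq_mul_right_iff, -mul_eq_mul_left_iff]; try ring
  · refine (pdP _ _ _ 0 0 0 0 (C*u 1)
      (fun t => by simp [f2, Function.update_apply]; try ring)).trans ?_
    simp [f3, Matrix.vecHead, Matrix.vecTail, -mul_eq_mul_right_iff, -mul_eq_mul_left_iff]; try ring
  · refine (pdP _ _ _ 0 0 0 C (3*C/2*(u 1)^2*(u 2)⁻¹)
      (fun t => by simp [f2, Function.update_apply]; try ring)).trans ?_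
    simp [f3, Matrix.vecHead, Matrix.vecTail, -mul_eq_mul_right_iff, -mul_eq_mul_left_iff]; try ring
  · refine (pdP _ _ _ 0 0 (3*C/2*(u 2)⁻¹) 0 (C*u 0)
      (fun t => by simp [f2, Function.update_apply]; try ring)).trans ?_
    simp [f3, Matrix.vecHead, Matrix.vecTail, -mul_eq_mul_right_iff, -mul_eq_mul_left_iff]; try ring
  · refine (pdL _ _ _ hu 0 (C*u 0) (3*C/2*(u 1)^2) 0 0
      (fun t => by simp [f2, Function.update_apply]; try ring)).trans ?_
    simp [f3, Matrix.vecHead, Matrix.vecTail, -mul_eq_mul_right_iff, -mul_eq_mul_left_iff]; try ring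
  · refine (pdP _ _ _ 0 0 0 0 (-(C/2)*(u 1)^3*((u 2)^2)⁻¹)
      (fun t => by simp [f2, Function.update_apply]; try ring)).trans ?_
    simp [f3, Matrix.vecHead, Matrix.vecTail, -mul_eq_mul_right_iff, -mul_eq_mul_left_iff]; try ring
  · refine (pdP _ _ _ 0 (-(C/2)*((u 2)^2)⁻¹) 0 0 0
      (fun t => by simp [f2, Function.update_apply]; try ring)).trans ?_
    simp [f3, Matrix.vecHead, Matrix.vecTail, -mul_eq_mul_right_iff, -mul_eq_mul_left_iff]; try ring
  · refine (pdL _ _ _ hu 0 0 0 (-(C/2)*(u 1)^3) 0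
      (fun t => by simp [f2, Function.update_apply]; try ring)).trans ?_
    simp [f3, Matrix.vecHead, Matrix.vecTail, -mul_eq_mul_right_iff, -mul_eq_mul_left_iff]; try ring
  · refine (pdP _ _ _ 0 0 0 C 0
      (fun t => by simp [f2, Function.update_apply]; try ring)).trans ?_
    simp [f3, Matrix.vecHead, Matrix.vecTail, -mul_eq_mul_right_iff, -mul_eq_mul_left_iff]; try ring
  · refine (pdP _ _ _ 0 0 0 0 (C*u 0)
      (fun t => by simp [f2, Function.update_apply]; try ring)).trans ?_
    simp [f3, Matrix.vecHead, Matrix.vecTail, -mul_eq_mul_right_iff, -mul_eq_mul_left_iff]; try ring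
  · refine (pdP _ _ _ 0 0 0 0 (C*u 0)
      (fun t => by simp [f2, Function.update_apply]; try ring)).trans ?_
    simp [f3, Matrix.vecHead, Matrix.vecTail, -mul_eq_mul_right_iff, -mul_eq_mul_left_iff]; try ring
  · refine (pdP _ _ _ 0 0 0 0 (-(C/2)*(u 1)^3*((u 2)^2)⁻¹)
      (fun t => by simp [f2, Function.update_apply]; try ring)).trans ?_
    simp [f3, Matrix.vecHead, Matrix.vecTail, -mul_eq_mul_right_iff, -mul_eq_mul_left_iff]; try ring
  · refine (pdP _ _ _ 0 (-(C/2)*((u 2)^2)⁻¹) 0 0 0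
      (fun t => by simp [f2, Function.update_apply]; try ring)).trans ?_
    simp [f3, Matrix.vecHead, Matrix.vecTail, -mul_eq_mul_right_iff, -mul_eq_mul_left_iff]; try ring
  · refine (pdL _ _ _ hu 0 0 0 (-(C/2)*(u 1)^3) 0
      (fun t => by simp [f2, Function.update_apply]; try ring)).trans ?_
    simp [f3, Matrix.vecHead, Matrix.vecTail, -mul_eq_mul_right_iff, -mul_eq_mul_left_iff]; try ring
  · refine (pdP _ _ _ 0 0 0 0 (C/4*(u 1)^4*((u 2)^3)⁻¹)
      (fun t => by simp [f2, Function.update_apply]; try ring)).trans ?_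
    simp [f3, Matrix.vecHead, Matrix.vecTail, -mul_eq_mul_right_iff, -mul_eq_mul_left_iff]; try ring
  · refine (pdP _ _ _ (C/4*((u 2)^3)⁻¹) 0 0 0 0
      (fun t => by simp [f2, Function.update_apply]; try ring)).trans ?_
    simp [f3, Matrix.vecHead, Matrix.vecTail, -mul_eq_mul_right_iff, -mul_eq_mul_left_iff]; try ring
  · refine (pdL _ _ _ hu 0 0 0 0 (C/4*(u 1)^4)
      (fun t => by simp [f2, Function.update_apply]; try ring)).trans ?_
    simp [f3, Matrix.vecHead, Matrix.vecTail, -mul_eq_mul_right_iff, -mul_eq_mul_left_iff]; try ring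

lemma L1 (C : ℝ) (u : Fin 3 → ℝ) (hu : u 2 ≠ 0) (a : Fin 3) :
    pd (FF C) a u = f1 C a u := by
  fin_cases a
  · refine (pdP _ _ _ 0 0 (C/2*u 2) (C/2*(u 1)^2) (C/8*(u 1)^4/u 2)
      (fun t => by simp [FF, Function.update_apply]; try ring)).trans ?_
    simp [f1]; try ring
  · refine (pdP _ _ _ (C/8*(u 2)⁻¹) 0 (C/2*u 0) 0 (C/2*(u 0)^2*u 2)
      (fun t => by simp [FF, Function.update_apply]; try ring)).trans ?_
    simp [f1]; try ring
  · refine (pdL _ _ _ hu (C/2*(u 0)^2) (C/2*u 0*(u 1)^2) (C/8*(u 1)^4) 0 0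
      (fun t => by simp [FF, Function.update_apply]; try ring)).trans ?_
    simp [f1]; try ring

lemma key (C : ℝ) (u : Fin 3 → ℝ) (hu : u 2 ≠ 0) (i j a : Fin 3) :
    pd3rd (FF C) i j a u = f3 C a j i u := by
  have s1 : ∀ v, v 2 ≠ 0 → pd (FF C) a v = f1 C a v := fun v hv => L1 C v hv a
  have s2 : ∀ v, v 2 ≠ 0 → pd (pd (FF C) a) j v = f2 C a j v := fun v hv =>
    (pd_congr s1 j v hv).trans (L2 C v hv a j)
  exact (pd_congr s2 i u hu).trans (L3 C u hu a j i)

lemma hinv (C : ℝ) (hC : C ≠ 0) :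
    (!![(0:ℝ), 0, C; 0, C, 0; C, 0, 0])⁻¹ = !![0, 0, C⁻¹; 0, C⁻¹, 0; C⁻¹, 0, 0] := by
  apply Matrix.inv_eq_right_inv
  ext i j
  fin_cases i <;> fin_cases j <;>
    simp [Matrix.mul_apply, Fin.sum_univ_three, Matrix.one_apply, Matrix.vecHead, Matrix.vecTail, mul_inv_cancel₀ hC, -mul_eq_zero]

set_option maxHeartbeats 2000000 in
/-- the prepotential
`F = (C₄/2)(x¹)²x³ + (C₄/2)x¹(x²)² + (C₄/8)(x²)⁴/x³` satisfies the WDVV equations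
with respect to `η̃ = [[0,0,C₄],[0,C₄,0],[C₄,0,0]]` on `{x³ ≠ 0}`. -/
theorem stmt_12 (C₄ : ℝ) (hC₄ : C₄ ≠ 0) :
    SatisfiesWDVV !![0, 0, C₄; 0, C₄, 0; C₄, 0, 0]
      (fun x : Fin 3 → ℝ =>
        C₄ / 2 * (x 0) ^ 2 * x 2 + C₄ / 2 * x 0 * (x 1) ^ 2
          + C₄ / 8 * (x 1) ^ 4 / x 2)
      {x : Fin 3 → ℝ | x 2 ≠ 0} := by
  intro x hx i j k l
  have hx' : x 2 ≠ 0 := hx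
  have hF : (fun x : Fin 3 → ℝ =>
      C₄ / 2 * (x 0) ^ 2 * x 2 + C₄ / 2 * x 0 * (x 1) ^ 2
        + C₄ / 8 * (x 1) ^ 4 / x 2) = FF C₄ := rfl
  rw [hF]
  simp only [key C₄ x hx', hinv C₄ hC₄, Fin.sum_univ_three]
  fin_cases i <;> fin_cases j <;> fin_cases k <;> fin_cases l <;>
    · simp [f3, Matrix.vecHead, Matrix.vecTail,
        -mul_eq_mul_right_iff, -mul_eq_mul_left_iff]
      try ring
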